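/- Let p*_f = exp(β x_f)/∑_{f'} exp(β x_{f'}) and p̄_f = α_f·exp(β x_f)/∑_{f'} α_{f'}·exp(β x_{f'}), where each α_f satisfies exp(−β·Δ_max) ≤ α_f ≤ exp(β·Δ_max). Then the total variation distance d_TV(p*, p̄) = (1/2)·∑_{f∈F} |p*_f − p̄_f| satisfies 0 ≤ d_TV(p*, p̄) ≤ 1 − exp(−2β·Δ_max). -/
import Mathlib


open Finset Real

theorem stmt_7 {F : Type*} [Fintype F] [Nonempty F] (x : F → ℝ) (β : ℝ) (hβ : 0 < β)
    (Δmax : ℝ) (hΔmax : 0 ≤ Δmax)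
    (α : F → ℝ)
    (hα : ∀ f, Real.exp (-(β * Δmax)) ≤ α f ∧ α f ≤ Real.exp (β * Δmax))
    (pstar pbar : F → ℝ)
    (hps : ∀ f, pstar f = Real.exp (β * x f) / ∑ f', Real.exp (β * x f'))
    (hpb : ∀ f, pbar f = α f * Real.exp (β * x f) / ∑ f', α f' * Real.exp (β * x f')) :
    0 ≤ (1 / 2) * ∑ f, |pstar f - pbar f| ∧
    (1 / 2) * ∑ f, |pstar f - pbar f| ≤ 1 - Real.exp (-(2 * β * Δmax)) := by
  constructor
  · positivity
  set S := ∑ f', Real.exp (β * x f') with hS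
  set T := ∑ f', α f' * Real.exp (β * x f') with hT
  have hSpos : 0 < S := Finset.sum_pos (fun f _ => Real.exp_pos _) Finset.univ_nonempty
  have hαpos : ∀ f, 0 < α f := fun f => lt_of_lt_of_le (Real.exp_pos _) (hα f).1
  have hTpos : 0 < T :=
    Finset.sum_pos (fun f _ => mul_pos (hαpos f) (Real.exp_pos _)) Finset.univ_nonempty
  have hTle : T ≤ Real.exp (β * Δmax) * S := by
    rw [hT, hS, Finset.mul_sum]
    exact Finset.sum_le_sum fun f _ => mul_le_mul_of_nonneg_right (hα f).2 (Real.exp_pos _).le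
  set c := Real.exp (-(2 * β * Δmax)) with hc
  have hc0 : 0 < c := Real.exp_pos _
  have hc1 : c ≤ 1 := by
    rw [hc]
    apply Real.exp_le_one_iff.mpr
    nlinarith
  -- key: c * pstar f ≤ pbar f
  have hkey : ∀ f, c * pstar f ≤ pbar f := by
    intro f
    rw [hps, hpb]
    have e1 : Real.exp (-(β * Δmax)) * Real.exp (β * x f) / (Real.exp (β * Δmax) * S)
        = c * (Real.exp (β * x f) / S) := by
      rw [hc, mul_comm, mul_div_assoc, div_mul_eq_div_div, ← Real.exp_sub]
      ring_nf
    calc c * (Real.exp (β * x f) / S)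
        = Real.exp (-(β * Δmax)) * Real.exp (β * x f) / (Real.exp (β * Δmax) * S) := e1.symm
      _ ≤ Real.exp (-(β * Δmax)) * Real.exp (β * x f) / T := by
          apply div_le_div_of_nonneg_left (by positivity) hTpos hTle
      _ ≤ α f * Real.exp (β * x f) / T := by
          gcongr
          exact (hα f).1
  have hsum_star : ∑ f, pstar f = 1 := by
    rw [Finset.sum_congr rfl fun f _ => hps f, ← Finset.sum_div, ← hS, div_self hSpos.ne']
  have hsum_bar : ∑ f, pbar f = 1 := by
    rw [Finset.sum_congr rfl fun f _ => hpb f, ← Finset.sum_div, ← hT, div_self hTpos.ne']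
  have hstar_nonneg : ∀ f, 0 ≤ pstar f := by
    intro f; rw [hps]; positivity
  have habs : ∀ a : ℝ, |a| = 2 * max a 0 - a := by
    intro a
    rcases le_total a 0 with h | h
    · rw [abs_of_nonpos h, max_eq_right h]; ring
    · rw [abs_of_nonneg h, max_eq_left h]; ring
  have hTV : (1 / 2) * ∑ f, |pstar f - pbar f| = ∑ f, max (pstar f - pbar f) 0 := by
    rw [Finset.sum_congr rfl fun f _ => habs (pstar f - pbar f), Finset.sum_sub_distrib,
      Finset.sum_sub_distrib, ← Finset.mul_sum, hsum_star, hsum_bar]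
    ring
  rw [hTV]
  calc ∑ f, max (pstar f - pbar f) 0
      ≤ ∑ f, (1 - c) * pstar f := by
        apply Finset.sum_le_sum
        intro f _
        apply max_le
        · nlinarith [hkey f]
        · have := hstar_nonneg f; nlinarith
    _ = 1 - c := by rw [← Finset.mul_sum, hsum_star, mul_one]
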